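/- Let S¹ = (a¹, C¹) and S² = (a², C²) be two MMSets with a¹ ∈ ℝ^n, a² ∈ ℝ^m probability vectors and C¹ ∈ ℝ^{n×n}, C² ∈ ℝ^{m×m}, and let p ∈ {1,2}. For rows i of C¹ and j of C² define W^{12}(i,j) as the infimum over Q ∈ U(a¹,a²) of ∑_{k,l} Q_{kl} |C¹_{ik} − C²_{jl}|^p, and analogously W^{11}(i,j) over U(a¹,a¹) with rows i, j of C¹, and W^{22}(i,j) over U(a²,a²) with rows i, j of C². Then the Anchor Energy distance AE_p(S¹,S²) := 2 ∑_{i,j} a¹_i a²_j W^{12}(i,j) − ∑_{i,j} a¹_i a¹_j W^{11}(i,j) − ∑_{i,j} a²_i a²_j W^{22}(i,j) is nonnegative. -/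

import Mathlib

open Finset

/-- A probability vector: nonnegative entries summing to 1. -/
def IsProbVec {n : ℕ} (a : Fin n → ℝ) : Prop :=
  (∀ i, 0 ≤ a i) ∧ ∑ i, a i = 1

/-- The transportation polytope `U(a,b)`. -/
def transportPolytope {n m : ℕ} (a : Fin n → ℝ) (b : Fin m → ℝ) :
    Set (Fin n → Fin m → ℝ) :=
  {P | (∀ i j, 0 ≤ P i j) ∧ (∀ i, ∑ j, P i j = a i) ∧ (∀ j, ∑ i, P i j = b j)}

namespace AEProof

open MeasureTheory

/-! ### Interval-length arithmetic -/

/-- length of `Ioc a b ∩ Ioc c d` -/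
noncomputable def len (a b c d : ℝ) : ℝ := max 0 (min b d - max a c)

lemma len_nonneg (a b c d : ℝ) : 0 ≤ len a b c d := le_max_left _ _

lemma len_comm (a b c d : ℝ) : len a b c d = len c d a b := by
  simp [len, min_comm, max_comm]

lemma len_eq (a b c d : ℝ) (hab : a ≤ b) (hcd : c ≤ d) :
    len a b c d = min b (max a d) - min b (max a c) := by
  simp only [len, min_def, max_def]; split_ifs <;> linarith

lemma sum_len_tel (a b : ℝ) (hab : a ≤ b) (T : ℕ → ℝ)
    (hT : ∀ i, T i ≤ T (i + 1)) (hT0 : T 0 = 0) (i₀ : ℕ) :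
    ∑ i ∈ range i₀, len a b (T i) (T (i + 1)) = len a b 0 (T i₀) := by
  have hmono : ∀ i, 0 ≤ T i := by
    intro i
    induction i with
    | zero => simp [hT0]
    | succ k ih => exact ih.trans (hT k)
  have : ∀ i ∈ range i₀, len a b (T i) (T (i+1)) =
      (fun t => min b (max a t)) (T (i+1)) - (fun t => min b (max a t)) (T i) := by
    intro i _; exact len_eq a b (T i) (T (i+1)) hab (hT i)
  rw [Finset.sum_congr rfl this, Finset.sum_range_sub (fun i => min b (max a (T i)))]
  rw [hT0, len_eq a b 0 (T i₀) hab (hmono i₀)]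

/-! ### Sorted weights and cumulative sums -/

def ext {n : ℕ} (f : Fin n → ℝ) : ℕ → ℝ := fun j => if h : j < n then f ⟨j, h⟩ else 0

noncomputable def sp {n : ℕ} (x : Fin n → ℝ) : Equiv.Perm (Fin n) := Tuple.sort x

noncomputable def sw {n : ℕ} (a x : Fin n → ℝ) : ℕ → ℝ := ext (a ∘ sp x)
noncomputable def sv {n : ℕ} (x : Fin n → ℝ) : ℕ → ℝ := ext (x ∘ sp x)
noncomputable def cs {n : ℕ} (a x : Fin n → ℝ) : ℕ → ℝ := fun k => ∑ j ∈ range k, sw a x j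

section basic
variable {n : ℕ} {a x : Fin n → ℝ}

lemma sv_mono {j j' : ℕ} (hjj : j ≤ j') (hj' : j' < n) : sv x j ≤ sv x j' := by
  have := Tuple.monotone_sort x (a := ⟨j, lt_of_le_of_lt hjj hj'⟩) (b := ⟨j', hj'⟩) hjj
  simpa [sv, ext, dif_pos hj', dif_pos (lt_of_le_of_lt hjj hj'), sp] using this

lemma sw_nonneg (ha : IsProbVec a) (j : ℕ) : 0 ≤ sw a x j := by
  unfold sw ext; split
  · exact ha.1 _
  · exact le_refl _

lemma sw_eq_zero {j : ℕ} (hj : n ≤ j) : sw a x j = 0 := by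
  unfold sw ext; rw [dif_neg (by omega)]

lemma cs_zero : cs a x 0 = (0:ℝ) := by simp [cs]
lemma cs_succ (k : ℕ) : cs a x (k+1) = cs a x k + sw a x k := Finset.sum_range_succ _ _
lemma cs_le_succ (ha : IsProbVec a) (k : ℕ) : cs a x k ≤ cs a x (k+1) := by
  rw [cs_succ]; linarith [sw_nonneg (a := a) (x := x) ha k]
lemma cs_nonneg (ha : IsProbVec a) (k : ℕ) : (0:ℝ) ≤ cs a x k :=
  Finset.sum_nonneg fun j _ => sw_nonneg ha j
lemma cs_n (ha : IsProbVec a) : cs a x n = 1 := by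
  unfold cs sw
  rw [← Fin.sum_univ_eq_sum_range]
  have : ∀ i : Fin n, ext (a ∘ sp x) (i : ℕ) = a (sp x i) := by intro i; simp [ext]
  rw [Finset.sum_congr rfl (fun i _ => this i), Equiv.sum_comp (sp x) a]
  exact ha.2
lemma cs_mono (ha : IsProbVec a) {k k' : ℕ} (h : k ≤ k') : cs a x k ≤ cs a x k' := by
  induction k' with
  | zero => simp at h; simp [h]
  | succ j ih =>
    rcases Nat.lt_or_ge k (j+1) with h' | h'
    · exact (ih (Nat.lt_succ_iff.mp h')).trans (cs_le_succ ha j)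
    · have : k = j + 1 := le_antisymm h h'
      simp [this]
lemma cs_of_ge (ha : IsProbVec a) {k : ℕ} (h : n ≤ k) : cs a x k = 1 := by
  induction k with
  | zero => have : n = 0 := Nat.le_zero.mp h; rw [← this]; exact cs_n ha
  | succ j ih =>
    rcases Nat.lt_or_ge j n with h' | h'
    · have : n = j + 1 := by omega
      rw [← this]; exact cs_n ha
    · rw [cs_succ, ih h', sw_eq_zero h', add_zero]
lemma cs_le_one (ha : IsProbVec a) (k : ℕ) : cs a x k ≤ 1 := by
  rcases Nat.le_total k n with h | h
  · exact (cs_mono ha h).trans_eq (cs_n ha)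
  · exact le_of_eq (cs_of_ge ha h)

end basic

/-! ### The monotone (quantile) coupling -/

noncomputable def cpl {n m : ℕ} (a x : Fin n → ℝ) (b y : Fin m → ℝ) :
    Fin n → Fin m → ℝ :=
  fun k l => len (cs a x ((sp x).symm k)) (cs a x (((sp x).symm k : ℕ) + 1))
                 (cs b y ((sp y).symm l)) (cs b y (((sp y).symm l : ℕ) + 1))

section cpl
variable {n m : ℕ} {a x : Fin n → ℝ} {b y : Fin m → ℝ}

lemma cpl_nonneg (k : Fin n) (l : Fin m) : 0 ≤ cpl a x b y k l := len_nonneg _ _ _ _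

lemma cpl_row (ha : IsProbVec a) (hb : IsProbVec b) (k : Fin n) :
    ∑ l, cpl a x b y k l = a k := by
  rw [← Equiv.sum_comp (sp y) (fun l => cpl a x b y k l)]
  have h1 : ∀ i : Fin m, cpl a x b y k (sp y i) =
      (fun i' : ℕ => len (cs a x ((sp x).symm k)) (cs a x (((sp x).symm k : ℕ) + 1))
        (cs b y i') (cs b y (i' + 1))) (i : ℕ) := by
    intro i; simp [cpl]
  rw [Finset.sum_congr rfl (fun i _ => h1 i), Fin.sum_univ_eq_sum_range
    (fun i' : ℕ => len (cs a x ((sp x).symm k)) (cs a x (((sp x).symm k : ℕ) + 1))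
      (cs b y i') (cs b y (i' + 1))) m]
  rw [sum_len_tel _ _ (cs_le_succ ha _) _ (fun i => cs_le_succ hb i) (by simp [cs]) m]
  have h0 : (0:ℝ) ≤ cs a x ((sp x).symm k) := cs_nonneg ha _
  have h2 : cs a x (((sp x).symm k : ℕ)+1) ≤ 1 := cs_le_one ha _
  have h3 : cs b y m = 1 := cs_of_ge hb le_rfl
  rw [h3]
  have h4 : len (cs a x ((sp x).symm k)) (cs a x (((sp x).symm k : ℕ) + 1)) 0 1
      = cs a x (((sp x).symm k : ℕ) + 1) - cs a x ((sp x).symm k) := by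
    have h5 := cs_le_succ (x := x) ha ((sp x).symm k)
    simp only [len, min_def, max_def]; split_ifs <;> linarith
  rw [h4, cs_succ]
  have : sw a x ((sp x).symm k) = a k := by
    simp [sw, ext, Fin.is_lt, Fin.eta]
  rw [this]; ring

lemma cpl_col (ha : IsProbVec a) (hb : IsProbVec b) (l : Fin m) :
    ∑ k, cpl a x b y k l = b l := by
  have : ∀ k, cpl a x b y k l = cpl b y a x l k := by
    intro k; simp [cpl, len_comm]
  rw [Finset.sum_congr rfl (fun k _ => this k)]
  exact cpl_row hb ha l

lemma cpl_mem (ha : IsProbVec a) (hb : IsProbVec b) :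
    cpl a x b y ∈ transportPolytope a b :=
  ⟨fun k l => cpl_nonneg k l, cpl_row ha hb, cpl_col ha hb⟩

end cpl

/-! ### Threshold representation of monotone 0/1 vectors -/

lemma threshold (w : ℕ → ℝ) (n : ℕ) (h01 : ∀ j < n, w j = 0 ∨ w j = 1)
    (hanti : ∀ j j', j ≤ j' → j' < n → w j' ≤ w j) :
    ∃ j₀ ≤ n, ∀ j < n, w j = if j < j₀ then 1 else 0 := by
  have hex : ∃ j, ¬(j < n ∧ w j = 1) := ⟨n, by simp⟩
  set j₀ := Nat.find hex with hj₀def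
  refine ⟨j₀, Nat.find_le (by simp), ?_⟩
  intro j hj
  by_cases h : j < j₀
  · have h3 := Nat.find_min hex h
    have h2 : w j = 1 := by tauto
    simp [h, h2]
  · push_neg at h
    have hspec := Nat.find_spec hex
    have hj₀n : j₀ < n := lt_of_le_of_lt h hj
    have hw0 : w j₀ = 0 := by
      rcases h01 j₀ hj₀n with h0 | h1
      · exact h0
      · exact absurd ⟨hj₀n, h1⟩ hspec
    have := hanti j₀ j h hj
    rcases h01 j hj with h0 | h1
    · simp [h0, if_neg (not_lt.mpr h)]
    · rw [h1] at this; rw [hw0] at this; linarith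

lemma sum_cut (F w : ℕ → ℝ) (n j₀ : ℕ) (hj₀ : j₀ ≤ n)
    (hw : ∀ j < n, w j = if j < j₀ then 1 else 0) :
    ∑ j ∈ range n, w j * F j = ∑ j ∈ range j₀, F j := by
  rw [Finset.range_eq_Ico, ← Finset.sum_Ico_consecutive _ (Nat.zero_le j₀) hj₀]
  have h1 : ∑ j ∈ Finset.Ico 0 j₀, w j * F j = ∑ j ∈ Finset.Ico 0 j₀, F j := by
    refine Finset.sum_congr rfl fun j hj => ?_
    rw [Finset.mem_Ico] at hj
    rw [hw j (lt_of_lt_of_le hj.2 hj₀), if_pos hj.2, one_mul]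
  have h2 : ∑ j ∈ Finset.Ico j₀ n, w j * F j = 0 := by
    refine Finset.sum_eq_zero fun j hj => ?_
    rw [Finset.mem_Ico] at hj
    rw [hw j hj.2, if_neg (not_lt.mpr hj.1), zero_mul]
  rw [h1, h2, add_zero, Finset.range_eq_Ico]

/-! ### The crux: the coupling `cpl` realizes the minimum of marginals on
monotone 0/1 test vectors -/

lemma crux {n m : ℕ} {a x : Fin n → ℝ} {b y : Fin m → ℝ}
    (ha : IsProbVec a) (hb : IsProbVec b) (u : Fin n → ℝ) (v : Fin m → ℝ)
    (hu01 : ∀ k, u k = 0 ∨ u k = 1) (hv01 : ∀ l, v l = 0 ∨ v l = 1)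
    (hu : ∀ k k', x k ≤ x k' → u k' ≤ u k) (hv : ∀ l l', y l ≤ y l' → v l' ≤ v l) :
    ∑ k, ∑ l, cpl a x b y k l * (u k * v l)
      = min (∑ k, a k * u k) (∑ l, b l * v l) := by
  classical
  set w : ℕ → ℝ := ext (u ∘ sp x) with hwdef
  set z : ℕ → ℝ := ext (v ∘ sp y) with hzdef
  obtain ⟨j₀, hj₀n, hwth⟩ : ∃ j₀ ≤ n, ∀ j < n, w j = if j < j₀ then 1 else 0 := by
    refine threshold w n (fun j hj => by simp [hwdef, ext, dif_pos hj]; exact hu01 _) ?_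
    intro j j' hjj hj'
    have hjn : j < n := lt_of_le_of_lt hjj hj'
    have hx : x (sp x ⟨j, hjn⟩) ≤ x (sp x ⟨j', hj'⟩) :=
      Tuple.monotone_sort x (a := ⟨j, hjn⟩) (b := ⟨j', hj'⟩) hjj
    simp only [hwdef, ext, dif_pos hjn, dif_pos hj']
    exact hu _ _ hx
  obtain ⟨i₀, hi₀m, hzth⟩ : ∃ i₀ ≤ m, ∀ i < m, z i = if i < i₀ then 1 else 0 := by
    refine threshold z m (fun i hi => by simp [hzdef, ext, dif_pos hi]; exact hv01 _) ?_
    intro i i' hii hi'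
    have hin : i < m := lt_of_le_of_lt hii hi'
    have hy : y (sp y ⟨i, hin⟩) ≤ y (sp y ⟨i', hi'⟩) :=
      Tuple.monotone_sort y (a := ⟨i, hin⟩) (b := ⟨i', hi'⟩) hii
    simp only [hzdef, ext, dif_pos hin, dif_pos hi']
    exact hv _ _ hy
  -- reindex the LHS
  have hL : ∑ k, ∑ l, cpl a x b y k l * (u k * v l)
      = ∑ j ∈ range n, w j * (∑ i ∈ range m, z i *
          len (cs a x j) (cs a x (j+1)) (cs b y i) (cs b y (i+1))) := by
    rw [← Equiv.sum_comp (sp x) (fun k => ∑ l, cpl a x b y k l * (u k * v l))]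
    rw [← Fin.sum_univ_eq_sum_range (fun j => w j * (∑ i ∈ range m, z i *
          len (cs a x j) (cs a x (j+1)) (cs b y i) (cs b y (i+1)))) n]
    refine Finset.sum_congr rfl fun j _ => ?_
    rw [← Equiv.sum_comp (sp y) (fun l => cpl a x b y (sp x j) l * (u (sp x j) * v l))]
    rw [Finset.mul_sum, ← Fin.sum_univ_eq_sum_range (fun i => w (j:ℕ) * (z i *
          len (cs a x j) (cs a x ((j:ℕ)+1)) (cs b y i) (cs b y (i+1)))) m]
    refine Finset.sum_congr rfl fun i _ => ?_
    simp only [cpl, Equiv.symm_apply_apply, hwdef, hzdef, ext, dif_pos j.isLt,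
      dif_pos i.isLt, Function.comp_apply, Fin.eta]
    ring
  rw [hL]
  have hinner : ∀ j : ℕ, (∑ i ∈ range m, z i *
      len (cs a x j) (cs a x (j+1)) (cs b y i) (cs b y (i+1)))
      = len (cs a x j) (cs a x (j+1)) 0 (cs b y i₀) := by
    intro j
    have : ∀ i ∈ range m, z i * len (cs a x j) (cs a x (j+1)) (cs b y i) (cs b y (i+1))
        = z i * (fun i' : ℕ => len (cs a x j) (cs a x (j+1)) (cs b y i') (cs b y (i'+1))) i :=
      fun i _ => rfl
    rw [Finset.sum_congr rfl this, sum_cut _ z m i₀ hi₀m hzth]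
    exact sum_len_tel _ _ (cs_le_succ ha j) _ (fun i => cs_le_succ hb i) (by simp [cs]) i₀
  rw [Finset.sum_congr rfl (fun j _ => by rw [hinner j]),
    sum_cut (fun j => len (cs a x j) (cs a x (j+1)) 0 (cs b y i₀)) w n j₀ hj₀n hwth]
  have : ∀ j ∈ range j₀, len (cs a x j) (cs a x (j+1)) 0 (cs b y i₀)
      = len 0 (cs b y i₀) (cs a x j) (cs a x (j+1)) := fun j _ => len_comm _ _ _ _
  rw [Finset.sum_congr rfl this,
    sum_len_tel _ _ (cs_nonneg hb i₀) _ (fun j => cs_le_succ ha j) (by simp [cs]) j₀]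
  -- right-hand side
  have hR1 : ∑ k, a k * u k = cs a x j₀ := by
    rw [← Equiv.sum_comp (sp x) (fun k => a k * u k)]
    have : ∀ j : Fin n, a (sp x j) * u (sp x j)
        = (fun j' : ℕ => w j' * sw a x j') (j : ℕ) := by
      intro j
      simp only [hwdef, sw, ext, dif_pos j.isLt, Function.comp_apply, Fin.eta]
      ring
    rw [Finset.sum_congr rfl (fun j _ => this j),
      Fin.sum_univ_eq_sum_range (fun j' : ℕ => w j' * sw a x j') n,
      sum_cut (sw a x) w n j₀ hj₀n hwth]
    rfl
  have hR2 : ∑ l, b l * v l = cs b y i₀ := by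
    rw [← Equiv.sum_comp (sp y) (fun l => b l * v l)]
    have : ∀ i : Fin m, b (sp y i) * v (sp y i)
        = (fun i' : ℕ => z i' * sw b y i') (i : ℕ) := by
      intro i
      simp only [hzdef, sw, ext, dif_pos i.isLt, Function.comp_apply, Fin.eta]
      ring
    rw [Finset.sum_congr rfl (fun i _ => this i),
      Fin.sum_univ_eq_sum_range (fun i' : ℕ => z i' * sw b y i') m,
      sum_cut (sw b y) z m i₀ hi₀m hzth]
    rfl
  rw [hR1, hR2]
  have h1 : (0:ℝ) ≤ cs a x j₀ := cs_nonneg ha j₀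
  have h2 : (0:ℝ) ≤ cs b y i₀ := cs_nonneg hb i₀
  simp only [len, min_def, max_def]
  split_ifs <;> linarith


section more
variable {n m : ℕ} {a x : Fin n → ℝ} {b y : Fin m → ℝ}

/-- reindexed double sums over the coupling -/
lemma cpl_sum_reindex (g : ℝ → ℝ → ℝ) :
    ∑ k, ∑ l, cpl a x b y k l * g (x k) (y l) =
    ∑ j ∈ range n, ∑ i ∈ range m,
      len (cs a x j) (cs a x (j+1)) (cs b y i) (cs b y (i+1)) * g (sv x j) (sv y i) := by
  rw [← Equiv.sum_comp (sp x) (fun k => ∑ l, cpl a x b y k l * g (x k) (y l))]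
  rw [← Fin.sum_univ_eq_sum_range]
  refine Finset.sum_congr rfl fun j _ => ?_
  rw [← Equiv.sum_comp (sp y) (fun l => cpl a x b y (sp x j) l * g (x (sp x j)) (y l))]
  rw [← Fin.sum_univ_eq_sum_range]
  refine Finset.sum_congr rfl fun i _ => ?_
  simp [cpl, sv, ext, j.isLt, i.isLt]


end more

section marg
variable {n m : ℕ} {a : Fin n → ℝ} {b : Fin m → ℝ} {Q : Fin n → Fin m → ℝ}

lemma sum_mul_row (hQ : Q ∈ transportPolytope a b) (u : Fin n → ℝ) :
    ∑ k, ∑ l, Q k l * u k = ∑ k, a k * u k := by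
  refine Finset.sum_congr rfl fun k _ => ?_
  rw [← Finset.sum_mul, hQ.2.1 k]

lemma sum_mul_col (hQ : Q ∈ transportPolytope a b) (v : Fin m → ℝ) :
    ∑ k, ∑ l, Q k l * v l = ∑ l, b l * v l := by
  rw [Finset.sum_comm]
  refine Finset.sum_congr rfl fun l _ => ?_
  rw [← Finset.sum_mul, hQ.2.2 l, mul_comm]

lemma sum_mass (hQ : Q ∈ transportPolytope a b) (hb : ∑ l, b l = 1) :
    ∑ k, ∑ l, Q k l = 1 := by
  rw [Finset.sum_comm]
  calc ∑ l, ∑ k, Q k l = ∑ l, b l := Finset.sum_congr rfl fun l _ => hQ.2.2 l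
    _ = 1 := hb

lemma bound_uv (hQ : Q ∈ transportPolytope a b) (u : Fin n → ℝ) (v : Fin m → ℝ)
    (hu : ∀ k, 0 ≤ u k ∧ u k ≤ 1) (hv : ∀ l, 0 ≤ v l ∧ v l ≤ 1) :
    ∑ k, ∑ l, Q k l * (u k * v l) ≤ min (∑ k, a k * u k) (∑ l, b l * v l) := by
  refine le_min ?_ ?_
  · rw [← sum_mul_row hQ u]
    refine Finset.sum_le_sum fun k _ => Finset.sum_le_sum fun l _ => ?_
    have h := hQ.1 k l
    nlinarith [mul_nonneg (mul_nonneg h (hu k).1) (sub_nonneg.2 (hv l).2)]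
  · rw [← sum_mul_col hQ v]
    refine Finset.sum_le_sum fun k _ => Finset.sum_le_sum fun l _ => ?_
    have h := hQ.1 k l
    nlinarith [mul_nonneg (mul_nonneg h (hv l).1) (sub_nonneg.2 (hu k).2)]

/-! integral helpers -/

lemma integrable_ind (c d e : ℝ) :
    Integrable (Set.indicator (Set.Ioc c d) (fun _ => e)) := by
  rw [integrable_indicator_iff measurableSet_Ioc]
  exact integrableOn_const measure_Ioc_lt_top.ne

lemma integral_ind (c d e : ℝ) (hcd : c ≤ d) :
    ∫ t, Set.indicator (Set.Ioc c d) (fun _ => e) t = (d - c) * e := by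
  rw [integral_indicator_const e measurableSet_Ioc, Real.volume_real_Ioc_of_le hcd,
    smul_eq_mul]

lemma integrable_double_sum (f : Fin n → Fin m → ℝ → ℝ)
    (hint : ∀ k l, Integrable (f k l)) :
    Integrable (fun t => ∑ k, ∑ l, f k l t) := by
  apply integrable_finset_sum
  intro k _
  exact integrable_finset_sum _ (fun l _ => hint k l)

lemma integral_double_sum (f : Fin n → Fin m → ℝ → ℝ)
    (hint : ∀ k l, Integrable (f k l)) :
    ∫ t, (∑ k, ∑ l, f k l t) = ∑ k, ∑ l, ∫ t, f k l t := by
  rw [integral_finset_sum _ (fun k _ => integrable_finset_sum _ (fun l _ => hint k l))]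
  exact Finset.sum_congr rfl fun k _ => integral_finset_sum _ (fun l _ => hint k l)


end marg

lemma ind_eq_uv (xk yl t : ℝ) :
    Set.indicator (Set.Ioc (min xk yl) (max xk yl)) (fun _ => (1:ℝ)) t
     = (if xk < t then (1:ℝ) else 0) + (if yl < t then 1 else 0)
       - 2 * ((if xk < t then (1:ℝ) else 0) * (if yl < t then 1 else 0)) := by
  rw [Set.indicator_apply]
  simp only [Set.mem_Ioc, min_lt_iff, le_max_iff]
  by_cases h1 : xk < t <;> by_cases h2 : yl < t <;> split_ifs with h <;> norm_num <;> exfalso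
  · rcases h.2 with h' | h' <;> linarith
  · exact h ⟨Or.inl h1, Or.inr (le_of_not_gt h2)⟩
  · exact h ⟨Or.inr h2, Or.inl (le_of_not_gt h1)⟩
  · rcases h.1 with h' | h' <;> linarith

lemma max_min_abs (a b : ℝ) : max a b - min a b = |a - b| := by
  rw [max_sub_min_eq_abs, abs_sub_comm]


section opt
variable {n m : ℕ} {a x : Fin n → ℝ} {b y : Fin m → ℝ} {Q : Fin n → Fin m → ℝ}

lemma cpl_opt1 (ha : IsProbVec a) (hb : IsProbVec b) (hQ : Q ∈ transportPolytope a b) :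
    ∑ k, ∑ l, cpl a x b y k l * |x k - y l| ≤ ∑ k, ∑ l, Q k l * |x k - y l| := by
  classical
  set R := cpl a x b y with hRdef
  have hRmem : R ∈ transportPolytope a b := cpl_mem ha hb
  set ψ : Fin n → Fin m → ℝ → ℝ := fun k l t =>
    Set.indicator (Set.Ioc (min (x k) (y l)) (max (x k) (y l))) (fun _ => (1:ℝ)) t with hψ
  have hint : ∀ k l : _, Integrable (fun t => (Q k l - R k l) * ψ k l t) :=
    fun k l => (integrable_ind _ _ 1).const_mul _
  have key : ∑ k, ∑ l, Q k l * |x k - y l| - ∑ k, ∑ l, R k l * |x k - y l|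
      = ∫ t, ∑ k, ∑ l, (Q k l - R k l) * ψ k l t := by
    rw [integral_double_sum _ hint]
    have h2 : ∀ (k : Fin n) (l : Fin m), ∫ t, (Q k l - R k l) * ψ k l t
        = (Q k l - R k l) * |x k - y l| := by
      intro k l
      rw [MeasureTheory.integral_const_mul, hψ]
      simp only []
      rw [integral_ind _ _ _ (min_le_max), max_min_abs, mul_one]
    rw [Finset.sum_congr rfl (fun k _ => Finset.sum_congr rfl (fun l _ => h2 k l))]
    simp only [sub_mul, Finset.sum_sub_distrib]
  have hpt : ∀ t, 0 ≤ ∑ k, ∑ l, (Q k l - R k l) * ψ k l t := by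
    intro t
    set u : Fin n → ℝ := fun k => if x k < t then 1 else 0 with hu
    set v : Fin m → ℝ := fun l => if y l < t then 1 else 0 with hv
    have hu01 : ∀ k, u k = 0 ∨ u k = 1 := by
      intro k; by_cases h : x k < t <;> simp [hu, h]
    have hv01 : ∀ l, v l = 0 ∨ v l = 1 := by
      intro l; by_cases h : y l < t <;> simp [hv, h]
    have humono : ∀ k k', x k ≤ x k' → u k' ≤ u k := by
      intro k k' h; simp only [hu]; split_ifs with h1 h2 <;> norm_num <;> linarith
    have hvmono : ∀ l l', y l ≤ y l' → v l' ≤ v l := by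
      intro l l' h; simp only [hv]; split_ifs with h1 h2 <;> norm_num <;> linarith
    have hexp : ∀ P : Fin n → Fin m → ℝ, P ∈ transportPolytope a b →
        ∑ k, ∑ l, P k l * ψ k l t = ∑ k, a k * u k + ∑ l, b l * v l
          - 2 * ∑ k, ∑ l, P k l * (u k * v l) := by
      intro P hP
      have h1 : ∀ (k : Fin n) (l : Fin m), P k l * ψ k l t
          = P k l * u k + P k l * v l - 2 * (P k l * (u k * v l)) := by
        intro k l
        have := ind_eq_uv (x k) (y l) t
        simp only [hψ, hu, hv]
        rw [this]; ring
      calc ∑ k, ∑ l, P k l * ψ k l t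
          = ∑ k, ∑ l, (P k l * u k + P k l * v l - 2 * (P k l * (u k * v l))) :=
            Finset.sum_congr rfl fun k _ => Finset.sum_congr rfl fun l _ => h1 k l
        _ = (∑ k, ∑ l, P k l * u k) + (∑ k, ∑ l, P k l * v l)
            - 2 * ∑ k, ∑ l, P k l * (u k * v l) := by
            simp only [Finset.sum_add_distrib, Finset.sum_sub_distrib, ← Finset.mul_sum]
        _ = ∑ k, a k * u k + ∑ l, b l * v l - 2 * ∑ k, ∑ l, P k l * (u k * v l) := by
            rw [sum_mul_row hP u, sum_mul_col hP v]
    have hQexp := hexp Q hQ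
    have hRexp := hexp R hRmem
    have hcrux : ∑ k, ∑ l, R k l * (u k * v l)
        = min (∑ k, a k * u k) (∑ l, b l * v l) :=
      crux ha hb u v hu01 hv01 humono hvmono
    have hbd : ∑ k, ∑ l, Q k l * (u k * v l)
        ≤ min (∑ k, a k * u k) (∑ l, b l * v l) := by
      refine bound_uv hQ u v (fun k => ?_) (fun l => ?_)
      · rcases hu01 k with h | h <;> rw [h] <;> norm_num
      · rcases hv01 l with h | h <;> rw [h] <;> norm_num
    have hsplit : ∑ k, ∑ l, (Q k l - R k l) * ψ k l t
        = (∑ k, ∑ l, Q k l * ψ k l t) - ∑ k, ∑ l, R k l * ψ k l t := by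
      simp only [sub_mul, Finset.sum_sub_distrib]
    rw [hsplit, hQexp, hRexp, hcrux]
    linarith
  have h0 : (0:ℝ) ≤ ∫ t, ∑ k, ∑ l, (Q k l - R k l) * ψ k l t := integral_nonneg hpt
  linarith [key, h0]


lemma cpl_opt2 (hn : 0 < n) (hm : 0 < m)
    (ha : IsProbVec a) (hb : IsProbVec b) (hQ : Q ∈ transportPolytope a b) :
    ∑ k, ∑ l, cpl a x b y k l * |x k - y l|^2 ≤ ∑ k, ∑ l, Q k l * |x k - y l|^2 := by
  classical
  set R := cpl a x b y with hRdef
  have hRmem : R ∈ transportPolytope a b := cpl_mem ha hb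
  have hne1 : (univ : Finset (Fin n)).Nonempty := ⟨⟨0, hn⟩, mem_univ _⟩
  have hne2 : (univ : Finset (Fin m)).Nonempty := ⟨⟨0, hm⟩, mem_univ _⟩
  set c : ℝ := min (univ.inf' hne1 x) (univ.inf' hne2 y) with hc
  set x' : Fin n → ℝ := fun k => x k - c with hx'
  set y' : Fin m → ℝ := fun l => y l - c with hy'
  have hx'0 : ∀ k, 0 ≤ x' k := by
    intro k
    have : c ≤ x k := le_trans (min_le_left _ _) (Finset.inf'_le _ (mem_univ k))
    simp [hx']; linarith
  have hy'0 : ∀ l, 0 ≤ y' l := by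
    intro l
    have : c ≤ y l := le_trans (min_le_right _ _) (Finset.inf'_le _ (mem_univ l))
    simp [hy']; linarith
  -- expansion
  have hexp : ∀ P : Fin n → Fin m → ℝ, P ∈ transportPolytope a b →
      ∑ k, ∑ l, P k l * |x k - y l|^2
        = ∑ k, a k * (x' k)^2 + ∑ l, b l * (y' l)^2
          - 2 * ∑ k, ∑ l, P k l * (x' k * y' l) := by
    intro P hP
    have h1 : ∀ (k : Fin n) (l : Fin m), P k l * |x k - y l|^2
        = P k l * (x' k)^2 + P k l * (y' l)^2 - 2 * (P k l * (x' k * y' l)) := by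
      intro k l
      have h2 : |x k - y l|^2 = (x k - y l)^2 := sq_abs _
      have h3 : x k - y l = x' k - y' l := by simp [hx', hy']
      rw [h2, h3]; ring
    calc ∑ k, ∑ l, P k l * |x k - y l|^2
        = ∑ k, ∑ l, (P k l * (x' k)^2 + P k l * (y' l)^2 - 2 * (P k l * (x' k * y' l))) :=
          Finset.sum_congr rfl fun k _ => Finset.sum_congr rfl fun l _ => h1 k l
      _ = (∑ k, ∑ l, P k l * (x' k)^2) + (∑ k, ∑ l, P k l * (y' l)^2)
          - 2 * ∑ k, ∑ l, P k l * (x' k * y' l) := by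
          simp only [Finset.sum_add_distrib, Finset.sum_sub_distrib, ← Finset.mul_sum]
      _ = _ := by
          rw [sum_mul_row hP (fun k => (x' k)^2), sum_mul_col hP (fun l => (y' l)^2)]
  -- key inequality on correlations
  have hcorr : ∑ k, ∑ l, Q k l * (x' k * y' l) ≤ ∑ k, ∑ l, R k l * (x' k * y' l) := by
    set η : Fin m → ℝ → ℝ := fun l t => Set.indicator (Set.Ioc 0 (y' l)) (fun _ => (1:ℝ)) t
      with hη
    set ηx : Fin n → ℝ → ℝ := fun k s => Set.indicator (Set.Ioc 0 (x' k)) (fun _ => (1:ℝ)) s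
      with hηx
    -- pointwise-in-(s,t) nonneg core, giving F s ≥ 0
    have hcore : ∀ (vt : Fin m → ℝ), (∀ l, vt l = 0 ∨ vt l = 1) →
        (∀ l l', y l ≤ y l' → vt l ≤ vt l') →
        ∀ (us : Fin n → ℝ), (∀ k, us k = 0 ∨ us k = 1) →
        (∀ k k', x k ≤ x k' → us k ≤ us k') →
        0 ≤ ∑ k, ∑ l, (R k l - Q k l) * (us k * vt l) := by
      intro vt hvt01 hvtmono us hus01 husmono
      set ub : Fin n → ℝ := fun k => 1 - us k with hub
      set vb : Fin m → ℝ := fun l => 1 - vt l with hvb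
      have hub01 : ∀ k, ub k = 0 ∨ ub k = 1 := by
        intro k; rcases hus01 k with h | h <;> simp [hub, h]
      have hvb01 : ∀ l, vb l = 0 ∨ vb l = 1 := by
        intro l; rcases hvt01 l with h | h <;> simp [hvb, h]
      have hubmono : ∀ k k', x k ≤ x k' → ub k' ≤ ub k := by
        intro k k' h; simp only [hub]; linarith [husmono k k' h]
      have hvbmono : ∀ l l', y l ≤ y l' → vb l' ≤ vb l := by
        intro l l' h; simp only [hvb]; linarith [hvtmono l l' h]
      -- switch to complements
      have hswitch : ∀ P : Fin n → Fin m → ℝ, P ∈ transportPolytope a b →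
          ∑ k, ∑ l, P k l * (us k * vt l)
            = ∑ k, ∑ l, P k l - (∑ k, ∑ l, P k l * ub k) - (∑ k, ∑ l, P k l * vb l)
              + ∑ k, ∑ l, P k l * (ub k * vb l) := by
        intro P hP
        have h1 : ∀ (k : Fin n) (l : Fin m), P k l * (us k * vt l)
            = P k l - P k l * ub k - P k l * vb l + P k l * (ub k * vb l) := by
          intro k l; simp only [hub, hvb]; ring
        rw [Finset.sum_congr rfl fun k (_ : k ∈ univ) =>
          Finset.sum_congr rfl fun l (_ : l ∈ univ) => h1 k l]
        simp only [Finset.sum_add_distrib, Finset.sum_sub_distrib]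
      have hQs := hswitch Q hQ
      have hRs := hswitch R hRmem
      have hcrux : ∑ k, ∑ l, R k l * (ub k * vb l)
          = min (∑ k, a k * ub k) (∑ l, b l * vb l) :=
        crux ha hb ub vb hub01 hvb01 hubmono hvbmono
      have hbd : ∑ k, ∑ l, Q k l * (ub k * vb l)
          ≤ min (∑ k, a k * ub k) (∑ l, b l * vb l) := by
        refine bound_uv hQ ub vb (fun k => ?_) (fun l => ?_)
        · rcases hub01 k with h | h <;> rw [h] <;> norm_num
        · rcases hvb01 l with h | h <;> rw [h] <;> norm_num
      have hm1 := sum_mass hQ hb.2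
      have hm2 := sum_mass hRmem hb.2
      have hr1 := sum_mul_row hQ ub
      have hr2 := sum_mul_row hRmem ub
      have hc1 := sum_mul_col hQ vb
      have hc2 := sum_mul_col hRmem vb
      have hsplit : ∑ k, ∑ l, (R k l - Q k l) * (us k * vt l)
          = (∑ k, ∑ l, R k l * (us k * vt l)) - ∑ k, ∑ l, Q k l * (us k * vt l) := by
        simp only [sub_mul, Finset.sum_sub_distrib]
      rw [hsplit, hQs, hRs]
      linarith
    -- now build the nested integrals
    have hE : ∀ t : ℝ, 0 ≤ ∑ k, ∑ l, ((R k l - Q k l) * η l t) * x' k := by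
      intro t
      set vt : Fin m → ℝ := fun l => η l t with hvt
      have hvt01 : ∀ l, vt l = 0 ∨ vt l = 1 := by
        intro l; simp only [hvt, hη, Set.indicator_apply]
        split_ifs <;> simp
      have hvtmono : ∀ l l', y l ≤ y l' → vt l ≤ vt l' := by
        intro l l' h
        have hyy : y' l ≤ y' l' := by simp [hy']; linarith
        simp only [hvt, hη, Set.indicator_apply, Set.mem_Ioc]
        split_ifs with h1 h2 <;> norm_num
        · exact absurd ⟨h1.1, h1.2.trans hyy⟩ h2
      have hrepr : ∑ k, ∑ l, ((R k l - Q k l) * η l t) * x' k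
          = ∫ s, ∑ k, ∑ l, ((R k l - Q k l) * η l t) * ηx k s := by
        rw [integral_double_sum _ (fun k l => (integrable_ind _ _ _).const_mul _)]
        refine Finset.sum_congr rfl fun k _ => Finset.sum_congr rfl fun l _ => ?_
        rw [MeasureTheory.integral_const_mul,
          integral_ind _ _ _ (hx'0 k), sub_zero, mul_one]
      rw [hrepr]
      refine integral_nonneg fun s => ?_
      set us : Fin n → ℝ := fun k => ηx k s with hus
      have hus01 : ∀ k, us k = 0 ∨ us k = 1 := by
        intro k; simp only [hus, hηx, Set.indicator_apply]
        split_ifs <;> simp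
      have husmono : ∀ k k', x k ≤ x k' → us k ≤ us k' := by
        intro k k' h
        have hxx : x' k ≤ x' k' := by simp [hx']; linarith
        simp only [hus, hηx, Set.indicator_apply, Set.mem_Ioc]
        split_ifs with h1 h2 <;> norm_num
        · exact absurd ⟨h1.1, h1.2.trans hxx⟩ h2
      have := hcore vt hvt01 hvtmono us hus01 husmono
      calc (0:ℝ) ≤ ∑ k, ∑ l, (R k l - Q k l) * (us k * vt l) := this
        _ = ∑ k, ∑ l, ((R k l - Q k l) * η l t) * ηx k s := by
            refine Finset.sum_congr rfl fun k _ => Finset.sum_congr rfl fun l _ => ?_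
            simp only [hus, hvt]; ring
    -- integrate over t
    have hfinal : ∑ k, ∑ l, (R k l - Q k l) * (x' k * y' l)
        = ∫ t, ∑ k, ∑ l, ((R k l - Q k l) * η l t) * x' k := by
      rw [integral_double_sum _ (fun k l => ((integrable_ind _ _ _).const_mul _).mul_const _)]
      refine Finset.sum_congr rfl fun k _ => Finset.sum_congr rfl fun l _ => ?_
      have : (fun t => ((R k l - Q k l) * η l t) * x' k)
          = fun t => ((R k l - Q k l) * x' k) * η l t := by funext t; ring
      rw [this, MeasureTheory.integral_const_mul,
        integral_ind _ _ _ (hy'0 l), sub_zero, mul_one]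
      ring
    have h0 : (0:ℝ) ≤ ∑ k, ∑ l, (R k l - Q k l) * (x' k * y' l) := by
      rw [hfinal]; exact integral_nonneg hE
    have hsplit : ∑ k, ∑ l, (R k l - Q k l) * (x' k * y' l)
        = (∑ k, ∑ l, R k l * (x' k * y' l)) - ∑ k, ∑ l, Q k l * (x' k * y' l) := by
      simp only [sub_mul, Finset.sum_sub_distrib]
    linarith [hsplit ▸ h0]
  rw [hexp Q hQ, hexp R hRmem]
  linarith


end opt

/-- quantile step function -/
noncomputable def stepf {n : ℕ} (a x : Fin n → ℝ) : ℝ → ℝ :=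
  fun u => ∑ j ∈ range n,
    Set.indicator (Set.Ioc (cs a x j) (cs a x (j+1))) (fun _ => sv x j) u

section stepf
variable {n : ℕ} {a x : Fin n → ℝ}

lemma cell_exists (ha : IsProbVec a) {u : ℝ} (hu : u ∈ Set.Ioc (0:ℝ) 1) :
    ∃ j < n, u ∈ Set.Ioc (cs a x j) (cs a x (j+1)) := by
  have hex : ∃ k, ¬ (cs a x k < u) := ⟨n, by rw [cs_of_ge ha le_rfl]; exact not_lt.mpr hu.2⟩
  have hspec : ¬ (cs a x (Nat.find hex) < u) := Nat.find_spec hex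
  have h0 : cs a x 0 < u := by rw [cs_zero]; exact hu.1
  have hj₀pos : 0 < Nat.find hex := by
    rcases Nat.eq_zero_or_pos (Nat.find hex) with h | h
    · rw [h] at hspec; exact absurd h0 hspec
    · exact h
  obtain ⟨j, hj⟩ : ∃ j, Nat.find hex = j + 1 := ⟨Nat.find hex - 1, by omega⟩
  have hjlt : cs a x j < u := not_not.mp (fun hcon => (Nat.find_min hex (by omega)) hcon)
  rw [hj] at hspec
  refine ⟨j, ?_, hjlt, not_lt.mp hspec⟩
  by_contra hjn
  push_neg at hjn
  have : cs a x j = 1 := cs_of_ge ha hjn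
  rw [this] at hjlt
  exact absurd hu.2 (not_le.mpr hjlt)

lemma stepf_eval (ha : IsProbVec a) {u : ℝ} {j : ℕ} (hj : j < n)
    (hu : u ∈ Set.Ioc (cs a x j) (cs a x (j+1))) : stepf a x u = sv x j := by
  unfold stepf
  rw [Finset.sum_eq_single_of_mem j (mem_range.mpr hj)]
  · rw [Set.indicator_of_mem hu]
  · intro j' hj' hne
    rw [Set.indicator_of_notMem]
    intro hmem
    rcases lt_or_gt_of_ne hne with h | h
    · have : cs a x (j'+1) ≤ cs a x j := cs_mono ha h
      have h1 := hmem.1; have h2 := hmem.2; have h3 := hu.1; linarith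
    · have : cs a x (j+1) ≤ cs a x j' := cs_mono ha h
      have h1 := hmem.1; have h2 := hmem.2; have h3 := hu.2; linarith

lemma stepf_zero (ha : IsProbVec a) {u : ℝ} (hu : u ∉ Set.Ioc (0:ℝ) 1) :
    stepf a x u = 0 := by
  unfold stepf
  refine Finset.sum_eq_zero fun j hj => ?_
  rw [Set.indicator_of_notMem]
  intro hmem
  exact hu ⟨lt_of_le_of_lt (cs_nonneg ha j) hmem.1, hmem.2.trans (cs_le_one ha (j+1))⟩


end stepf

section pair
variable {n m : ℕ} {a x : Fin n → ℝ} {b y : Fin m → ℝ}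

lemma cell_disj (ha : IsProbVec a) {u : ℝ} {j j' : ℕ} (hne : j' ≠ j)
    (hu : u ∈ Set.Ioc (cs a x j) (cs a x (j+1))) :
    u ∉ Set.Ioc (cs a x j') (cs a x (j'+1)) := by
  intro hmem
  rcases lt_or_gt_of_ne hne with h | h
  · have : cs a x (j'+1) ≤ cs a x j := cs_mono ha h
    have h1 := hmem.1; have h2 := hmem.2; have h3 := hu.1; linarith
  · have : cs a x (j+1) ≤ cs a x j' := cs_mono ha h
    have h1 := hmem.1; have h2 := hmem.2; have h3 := hu.2; linarith

lemma stepf_pair (ha : IsProbVec a) (hb : IsProbVec b) {p : ℕ} (hp : p ≠ 0) (u : ℝ) :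
    |stepf a x u - stepf b y u|^p
      = ∑ j ∈ range n, ∑ i ∈ range m,
          Set.indicator (Set.Ioc (cs a x j) (cs a x (j+1)) ∩ Set.Ioc (cs b y i) (cs b y (i+1)))
            (fun _ => |sv x j - sv y i|^p) u := by
  by_cases hu : u ∈ Set.Ioc (0:ℝ) 1
  · obtain ⟨j, hjn, hju⟩ := cell_exists ha hu
    obtain ⟨i, him, hiu⟩ := cell_exists hb hu
    rw [stepf_eval ha hjn hju, stepf_eval hb him hiu]
    rw [Finset.sum_eq_single_of_mem j (mem_range.mpr hjn)
      (fun j' _ hne => Finset.sum_eq_zero fun i' _ =>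
        Set.indicator_of_notMem (fun hmem => cell_disj ha hne hju hmem.1) _)]
    rw [Finset.sum_eq_single_of_mem i (mem_range.mpr him)
      (fun i' _ hne => Set.indicator_of_notMem
        (fun hmem => cell_disj hb hne hiu hmem.2) _)]
    exact (Set.indicator_of_mem (Set.mem_inter hju hiu) (fun _ => |sv x j - sv y i|^p)).symm
  · rw [stepf_zero ha hu, stepf_zero hb hu, sub_zero, abs_zero, zero_pow hp]
    symm
    refine Finset.sum_eq_zero fun j _ => Finset.sum_eq_zero fun i _ => ?_
    refine Set.indicator_of_notMem (fun hmem => hu ?_) _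
    exact ⟨lt_of_le_of_lt (cs_nonneg ha j) hmem.1.1, hmem.1.2.trans (cs_le_one ha (j+1))⟩

lemma integral_double_sum' {α β : Type*} (s : Finset α) (t : Finset β) (f : α → β → ℝ → ℝ)
    (hint : ∀ k l, Integrable (f k l)) :
    ∫ u, (∑ k ∈ s, ∑ l ∈ t, f k l u) = ∑ k ∈ s, ∑ l ∈ t, ∫ u, f k l u := by
  rw [integral_finset_sum _ (fun k _ => integrable_finset_sum _ (fun l _ => hint k l))]
  exact Finset.sum_congr rfl fun k _ => integral_finset_sum _ (fun l _ => hint k l)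

lemma integrable_pair (ha : IsProbVec a) (hb : IsProbVec b) {p : ℕ} (hp : p ≠ 0) :
    Integrable (fun u => |stepf a x u - stepf b y u|^p) := by
  have : (fun u => |stepf a x u - stepf b y u|^p)
      = fun u => ∑ j ∈ range n, ∑ i ∈ range m,
          Set.indicator (Set.Ioc (cs a x j) (cs a x (j+1)) ∩ Set.Ioc (cs b y i) (cs b y (i+1)))
            (fun _ => |sv x j - sv y i|^p) u := by
    funext u; exact stepf_pair ha hb hp u
  rw [this]
  refine integrable_finset_sum _ fun j _ => integrable_finset_sum _ fun i _ => ?_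
  rw [Set.Ioc_inter_Ioc]
  exact integrable_ind _ _ _

lemma cost_eq_integral (ha : IsProbVec a) (hb : IsProbVec b) {p : ℕ} (hp : p ≠ 0) :
    ∑ k, ∑ l, cpl a x b y k l * |x k - y l|^p
      = ∫ u, |stepf a x u - stepf b y u|^p := by
  have h1 : (fun u => |stepf a x u - stepf b y u|^p)
      = fun u => ∑ j ∈ range n, ∑ i ∈ range m,
          Set.indicator (Set.Ioc (cs a x j) (cs a x (j+1)) ∩ Set.Ioc (cs b y i) (cs b y (i+1)))
            (fun _ => |sv x j - sv y i|^p) u := by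
    funext u; exact stepf_pair ha hb hp u
  rw [h1, integral_double_sum' _ _ _ (fun j i => by
    rw [Set.Ioc_inter_Ioc]; exact integrable_ind _ _ _)]
  rw [cpl_sum_reindex (fun s t => |s - t|^p)]
  refine Finset.sum_congr rfl fun j _ => Finset.sum_congr rfl fun i _ => ?_
  rw [Set.Ioc_inter_Ioc, integral_indicator_const _ measurableSet_Ioc, Real.volume_real_Ioc,
    smul_eq_mul]
  unfold len
  rw [max_comm]


end pair

/-- key algebraic identity for product couplings -/
lemma pair_sum {n m : ℕ} (a : Fin n → ℝ) (b : Fin m → ℝ) (u : Fin n → ℝ) (v : Fin m → ℝ)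
    (ha1 : ∑ i, a i = 1) (hb1 : ∑ j, b j = 1) :
    ∑ i, ∑ j, (a i * b j) * (u i + v j - 2 * (u i * v j))
      = (∑ i, a i * u i) + (∑ j, b j * v j)
        - 2 * ((∑ i, a i * u i) * (∑ j, b j * v j)) := by
  have h1 : ∀ (i : Fin n) (j : Fin m), (a i * b j) * (u i + v j - 2 * (u i * v j))
      = (a i * u i) * (b j) + (a i) * (b j * v j) - 2 * ((a i * u i) * (b j * v j)) := by
    intro i j; ring
  rw [Finset.sum_congr rfl fun i (_ : i ∈ univ) =>
    Finset.sum_congr rfl fun j (_ : j ∈ univ) => h1 i j]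
  simp only [Finset.sum_add_distrib, Finset.sum_sub_distrib, ← Finset.mul_sum,
    ← Finset.sum_mul]
  rw [ha1, hb1]
  ring

/-- 1-D energy distance inequality, `p = 1` -/
lemma energy1 {n m : ℕ} {a : Fin n → ℝ} {b : Fin m → ℝ}
    (ha : IsProbVec a) (hb : IsProbVec b) (X : Fin n → ℝ) (Y : Fin m → ℝ) :
    (∑ i, ∑ j, (a i * a j) * |X i - X j|) + (∑ i, ∑ j, (b i * b j) * |Y i - Y j|)
      ≤ 2 * ∑ i, ∑ j, (a i * b j) * |X i - Y j| := by
  classical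
  set ψ : ℝ → ℝ → ℝ → ℝ := fun c d t =>
    Set.indicator (Set.Ioc (min c d) (max c d)) (fun _ => (1:ℝ)) t with hψ
  have habs : ∀ (c d : ℝ), |c - d| = ∫ t, ψ c d t := by
    intro c d
    rw [hψ]
    simp only []
    rw [integral_ind _ _ _ min_le_max, mul_one, max_min_abs]
  -- integral representations
  have hrep : ∀ {N M : ℕ} (c : Fin N → ℝ) (d : Fin M → ℝ) (w : Fin N → Fin M → ℝ),
      ∑ i, ∑ j, w i j * |c i - d j| = ∫ t, ∑ i, ∑ j, w i j * ψ (c i) (d j) t := by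
    intro N M c d w
    rw [integral_double_sum _ (fun i j => (integrable_ind _ _ _).const_mul _)]
    refine Finset.sum_congr rfl fun i _ => Finset.sum_congr rfl fun j _ => ?_
    rw [MeasureTheory.integral_const_mul, ← habs]
  have hXY := hrep X Y (fun i j => a i * b j)
  have hXX := hrep X X (fun i j => a i * a j)
  have hYY := hrep Y Y (fun i j => b i * b j)
  -- combine into a single integral
  have hintXY : Integrable (fun t => ∑ i, ∑ j, (a i * b j) * ψ (X i) (Y j) t) :=
    integrable_double_sum _ (fun i j => (integrable_ind _ _ _).const_mul _)
  have hintXX : Integrable (fun t => ∑ i, ∑ j, (a i * a j) * ψ (X i) (X j) t) :=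
    integrable_double_sum _ (fun i j => (integrable_ind _ _ _).const_mul _)
  have hintYY : Integrable (fun t => ∑ i, ∑ j, (b i * b j) * ψ (Y i) (Y j) t) :=
    integrable_double_sum _ (fun i j => (integrable_ind _ _ _).const_mul _)
  have hpt : ∀ t, (∑ i, ∑ j, (a i * a j) * ψ (X i) (X j) t)
      + (∑ i, ∑ j, (b i * b j) * ψ (Y i) (Y j) t)
      ≤ 2 * (∑ i, ∑ j, (a i * b j) * ψ (X i) (Y j) t) := by
    intro t
    set u : Fin n → ℝ := fun i => if X i < t then 1 else 0 with hu
    set v : Fin m → ℝ := fun j => if Y j < t then 1 else 0 with hv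
    have g1 : ∑ i, ∑ j, (a i * b j) * ψ (X i) (Y j) t
        = (∑ i, a i * u i) + (∑ j, b j * v j)
          - 2 * ((∑ i, a i * u i) * (∑ j, b j * v j)) := by
      rw [Finset.sum_congr rfl fun i (_ : i ∈ univ) =>
        Finset.sum_congr rfl fun j (_ : j ∈ univ) => by simp only [hψ]; rw [ind_eq_uv (X i) (Y j) t]]
      exact pair_sum a b u v ha.2 hb.2
    have g2 : ∑ i, ∑ j, (a i * a j) * ψ (X i) (X j) t
        = (∑ i, a i * u i) + (∑ j, a j * u j)
          - 2 * ((∑ i, a i * u i) * (∑ j, a j * u j)) := by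
      rw [Finset.sum_congr rfl fun i (_ : i ∈ univ) =>
        Finset.sum_congr rfl fun j (_ : j ∈ univ) => by simp only [hψ]; rw [ind_eq_uv (X i) (X j) t]]
      exact pair_sum a a u u ha.2 ha.2
    have g3 : ∑ i, ∑ j, (b i * b j) * ψ (Y i) (Y j) t
        = (∑ i, b i * v i) + (∑ j, b j * v j)
          - 2 * ((∑ i, b i * v i) * (∑ j, b j * v j)) := by
      rw [Finset.sum_congr rfl fun i (_ : i ∈ univ) =>
        Finset.sum_congr rfl fun j (_ : j ∈ univ) => by simp only [hψ]; rw [ind_eq_uv (Y i) (Y j) t]]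
      exact pair_sum b b v v hb.2 hb.2
    rw [g1, g2, g3]
    nlinarith [sq_nonneg ((∑ i, a i * u i) - (∑ j, b j * v j))]
  calc (∑ i, ∑ j, (a i * a j) * |X i - X j|) + (∑ i, ∑ j, (b i * b j) * |Y i - Y j|)
      = ∫ t, ((∑ i, ∑ j, (a i * a j) * ψ (X i) (X j) t)
          + (∑ i, ∑ j, (b i * b j) * ψ (Y i) (Y j) t)) := by
        rw [integral_add hintXX hintYY, hXX, hYY]
    _ ≤ ∫ t, 2 * (∑ i, ∑ j, (a i * b j) * ψ (X i) (Y j) t) :=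
        integral_mono (hintXX.add hintYY) (hintXY.const_mul 2) hpt
    _ = 2 * ∑ i, ∑ j, (a i * b j) * |X i - Y j| := by
        rw [MeasureTheory.integral_const_mul, hXY]

/-- 1-D energy distance inequality, `p = 2` -/
lemma energy2 {n m : ℕ} {a : Fin n → ℝ} {b : Fin m → ℝ}
    (ha : IsProbVec a) (hb : IsProbVec b) (X : Fin n → ℝ) (Y : Fin m → ℝ) :
    (∑ i, ∑ j, (a i * a j) * |X i - X j|^2) + (∑ i, ∑ j, (b i * b j) * |Y i - Y j|^2)
      ≤ 2 * ∑ i, ∑ j, (a i * b j) * |X i - Y j|^2 := by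
  have habs : ∀ c d : ℝ, |c - d|^2 = c^2 + d^2 - 2*(c*d) := by
    intro c d; rw [sq_abs]; ring
  have hexp : ∀ {N M : ℕ} (w : Fin N → ℝ) (z : Fin M → ℝ) (c : Fin N → ℝ) (d : Fin M → ℝ),
      (∑ i, w i = 1) → (∑ j, z j = 1) →
      ∑ i, ∑ j, (w i * z j) * |c i - d j|^2
        = (∑ i, w i * (c i)^2) + (∑ j, z j * (d j)^2)
          - 2 * ((∑ i, w i * c i) * (∑ j, z j * d j)) := by
    intro N M w z c d hw hz
    have h1 : ∀ (i : Fin N) (j : Fin M), (w i * z j) * |c i - d j|^2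
        = (w i * (c i)^2) * z j + w i * (z j * (d j)^2) - 2 * ((w i * c i) * (z j * d j)) := by
      intro i j; rw [habs]; ring
    rw [Finset.sum_congr rfl fun i (_ : i ∈ univ) =>
      Finset.sum_congr rfl fun j (_ : j ∈ univ) => h1 i j]
    simp only [Finset.sum_add_distrib, Finset.sum_sub_distrib, ← Finset.mul_sum,
      ← Finset.sum_mul]
    rw [hw, hz]
    ring
  rw [hexp a b X Y ha.2 hb.2, hexp a a X X ha.2 ha.2, hexp b b Y Y hb.2 hb.2]
  nlinarith [sq_nonneg ((∑ i, a i * X i) - (∑ j, b j * Y j))]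


end AEProof

theorem stmt11 (n m : ℕ) (hn : 1 ≤ n) (hm : 1 ≤ m)
    (a1 : Fin n → ℝ) (a2 : Fin m → ℝ) (ha1 : IsProbVec a1) (ha2 : IsProbVec a2)
    (C1 : Fin n → Fin n → ℝ) (C2 : Fin m → Fin m → ℝ)
    (p : ℕ) (hp : p = 1 ∨ p = 2)
    (W12 : Fin n → Fin m → ℝ) (W11 : Fin n → Fin n → ℝ) (W22 : Fin m → Fin m → ℝ)
    (hW12 : ∀ i j, W12 i j = sInf ((fun Q => ∑ k, ∑ l, Q k l * |C1 i k - C2 j l| ^ p) ''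
      transportPolytope a1 a2))
    (hW11 : ∀ i j, W11 i j = sInf ((fun Q => ∑ k, ∑ l, Q k l * |C1 i k - C1 j l| ^ p) ''
      transportPolytope a1 a1))
    (hW22 : ∀ i j, W22 i j = sInf ((fun Q => ∑ k, ∑ l, Q k l * |C2 i k - C2 j l| ^ p) ''
      transportPolytope a2 a2)) :
    0 ≤ 2 * ∑ i, ∑ j, a1 i * a2 j * W12 i j
        - ∑ i, ∑ j, a1 i * a1 j * W11 i j
        - ∑ i, ∑ j, a2 i * a2 j * W22 i j := by
  classical
  open AEProof MeasureTheory in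
  have h0n : 0 < n := hn
  have h0m : 0 < m := hm
  have hp' : p ≠ 0 := by rcases hp with h | h <;> omega
  -- the optimal value of each `W` problem is attained by the monotone coupling
  have hopt : ∀ {N M : ℕ} (hN : 0 < N) (hM : 0 < M) (c : Fin N → ℝ) (d : Fin M → ℝ)
      (hc : IsProbVec c) (hd : IsProbVec d) (X : Fin N → ℝ) (Y : Fin M → ℝ)
      (Q : Fin N → Fin M → ℝ), Q ∈ transportPolytope c d →
      ∑ k, ∑ l, AEProof.cpl c X d Y k l * |X k - Y l| ^ p
        ≤ ∑ k, ∑ l, Q k l * |X k - Y l| ^ p := by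
    intro N M hN hM c d hc hd X Y Q hQ
    rcases hp with h | h
    · subst h; simpa only [pow_one] using AEProof.cpl_opt1 hc hd hQ
    · subst h; exact AEProof.cpl_opt2 hN hM hc hd hQ
  have hcost12 : ∀ i j, W12 i j
      = ∫ u, |AEProof.stepf a1 (C1 i) u - AEProof.stepf a2 (C2 j) u| ^ p := by
    intro i j
    rw [hW12 i j]
    have hleast : IsLeast ((fun Q => ∑ k, ∑ l, Q k l * |C1 i k - C2 j l| ^ p) ''
        transportPolytope a1 a2)
        (∑ k, ∑ l, AEProof.cpl a1 (C1 i) a2 (C2 j) k l * |C1 i k - C2 j l| ^ p) := by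
      constructor
      · exact ⟨_, AEProof.cpl_mem ha1 ha2, rfl⟩
      · rintro z ⟨Q, hQ, rfl⟩
        exact hopt h0n h0m a1 a2 ha1 ha2 (C1 i) (C2 j) Q hQ
    rw [hleast.csInf_eq, AEProof.cost_eq_integral ha1 ha2 hp']
  have hub : ∀ {N : ℕ} (c : Fin N → ℝ) (hc : IsProbVec c) (X Y : Fin N → ℝ)
      (W : ℝ), W = sInf ((fun Q => ∑ k, ∑ l, Q k l * |X k - Y l| ^ p) ''
        transportPolytope c c) →
      W ≤ ∫ u, |AEProof.stepf c X u - AEProof.stepf c Y u| ^ p := by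
    intro N c hc X Y W hW
    rw [hW, ← AEProof.cost_eq_integral hc hc hp']
    apply csInf_le
    · refine ⟨0, ?_⟩
      rintro z ⟨Q, hQ, rfl⟩
      exact Finset.sum_nonneg fun k _ => Finset.sum_nonneg fun l _ =>
        mul_nonneg (hQ.1 k l) (pow_nonneg (abs_nonneg _) p)
    · exact ⟨_, AEProof.cpl_mem hc hc, rfl⟩
  have hub11 : ∀ i j, W11 i j
      ≤ ∫ u, |AEProof.stepf a1 (C1 i) u - AEProof.stepf a1 (C1 j) u| ^ p :=
    fun i j => hub a1 ha1 (C1 i) (C1 j) (W11 i j) (hW11 i j)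
  have hub22 : ∀ i j, W22 i j
      ≤ ∫ u, |AEProof.stepf a2 (C2 i) u - AEProof.stepf a2 (C2 j) u| ^ p :=
    fun i j => hub a2 ha2 (C2 i) (C2 j) (W22 i j) (hW22 i j)
  -- integrability
  have hint12 : ∀ (i : Fin n) (j : Fin m),
      Integrable (fun u => |AEProof.stepf a1 (C1 i) u - AEProof.stepf a2 (C2 j) u| ^ p) :=
    fun i j => AEProof.integrable_pair ha1 ha2 hp'
  have hint11 : ∀ (i j : Fin n),
      Integrable (fun u => |AEProof.stepf a1 (C1 i) u - AEProof.stepf a1 (C1 j) u| ^ p) :=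
    fun i j => AEProof.integrable_pair ha1 ha1 hp'
  have hint22 : ∀ (i j : Fin m),
      Integrable (fun u => |AEProof.stepf a2 (C2 i) u - AEProof.stepf a2 (C2 j) u| ^ p) :=
    fun i j => AEProof.integrable_pair ha2 ha2 hp'
  -- move sums inside the integrals
  have hswap : ∀ {N M : ℕ} (c : Fin N → ℝ) (d : Fin M → ℝ)
      (f : Fin N → Fin M → ℝ → ℝ), (∀ i j, Integrable (f i j)) →
      ∑ i, ∑ j, c i * d j * ∫ u, f i j u = ∫ u, ∑ i, ∑ j, (c i * d j) * f i j u := by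
    intro N M c d f hint
    rw [AEProof.integral_double_sum _ (fun i j => (hint i j).const_mul _)]
    refine Finset.sum_congr rfl fun i _ => Finset.sum_congr rfl fun j _ => ?_
    rw [MeasureTheory.integral_const_mul]
  have e12 := hswap a1 a2 _ hint12
  have e11 := hswap a1 a1 _ hint11
  have e22 := hswap a2 a2 _ hint22
  -- pointwise energy inequality
  have hpt : ∀ u : ℝ,
      (∑ i, ∑ j, (a1 i * a1 j) * |AEProof.stepf a1 (C1 i) u - AEProof.stepf a1 (C1 j) u| ^ p)
      + (∑ i, ∑ j, (a2 i * a2 j) * |AEProof.stepf a2 (C2 i) u - AEProof.stepf a2 (C2 j) u| ^ p)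
      ≤ 2 * ∑ i, ∑ j, (a1 i * a2 j) *
          |AEProof.stepf a1 (C1 i) u - AEProof.stepf a2 (C2 j) u| ^ p := by
    intro u
    rcases hp with h | h
    · subst h
      simpa only [pow_one] using AEProof.energy1 ha1 ha2
        (fun i => AEProof.stepf a1 (C1 i) u) (fun j => AEProof.stepf a2 (C2 j) u)
    · subst h
      exact AEProof.energy2 ha1 ha2
        (fun i => AEProof.stepf a1 (C1 i) u) (fun j => AEProof.stepf a2 (C2 j) u)
  -- integrate the pointwise inequality
  have key : (∑ i, ∑ j, a1 i * a1 j *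
        ∫ u, |AEProof.stepf a1 (C1 i) u - AEProof.stepf a1 (C1 j) u| ^ p)
      + (∑ i, ∑ j, a2 i * a2 j *
        ∫ u, |AEProof.stepf a2 (C2 i) u - AEProof.stepf a2 (C2 j) u| ^ p)
      ≤ 2 * ∑ i, ∑ j, a1 i * a2 j *
        ∫ u, |AEProof.stepf a1 (C1 i) u - AEProof.stepf a2 (C2 j) u| ^ p := by
    rw [e12, e11, e22]
    have hI11 : Integrable (fun u => ∑ i, ∑ j, (a1 i * a1 j) *
        |AEProof.stepf a1 (C1 i) u - AEProof.stepf a1 (C1 j) u| ^ p) :=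
      AEProof.integrable_double_sum _ (fun i j => (hint11 i j).const_mul _)
    have hI22 : Integrable (fun u => ∑ i, ∑ j, (a2 i * a2 j) *
        |AEProof.stepf a2 (C2 i) u - AEProof.stepf a2 (C2 j) u| ^ p) :=
      AEProof.integrable_double_sum _ (fun i j => (hint22 i j).const_mul _)
    have hI12 : Integrable (fun u => ∑ i, ∑ j, (a1 i * a2 j) *
        |AEProof.stepf a1 (C1 i) u - AEProof.stepf a2 (C2 j) u| ^ p) :=
      AEProof.integrable_double_sum _ (fun i j => (hint12 i j).const_mul _)
    calc (∫ u, ∑ i, ∑ j, (a1 i * a1 j) *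
            |AEProof.stepf a1 (C1 i) u - AEProof.stepf a1 (C1 j) u| ^ p)
        + ∫ u, ∑ i, ∑ j, (a2 i * a2 j) *
            |AEProof.stepf a2 (C2 i) u - AEProof.stepf a2 (C2 j) u| ^ p
        = ∫ u, ((∑ i, ∑ j, (a1 i * a1 j) *
            |AEProof.stepf a1 (C1 i) u - AEProof.stepf a1 (C1 j) u| ^ p)
          + ∑ i, ∑ j, (a2 i * a2 j) *
            |AEProof.stepf a2 (C2 i) u - AEProof.stepf a2 (C2 j) u| ^ p) := by
          rw [integral_add hI11 hI22]
      _ ≤ ∫ u, 2 * ∑ i, ∑ j, (a1 i * a2 j) *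
            |AEProof.stepf a1 (C1 i) u - AEProof.stepf a2 (C2 j) u| ^ p :=
          integral_mono (hI11.add hI22) (hI12.const_mul 2) hpt
      _ = 2 * ∫ u, ∑ i, ∑ j, (a1 i * a2 j) *
            |AEProof.stepf a1 (C1 i) u - AEProof.stepf a2 (C2 j) u| ^ p := by
          rw [MeasureTheory.integral_const_mul]
  -- put everything together
  have hW12eq : ∑ i, ∑ j, a1 i * a2 j * W12 i j
      = ∑ i, ∑ j, a1 i * a2 j *
        ∫ u, |AEProof.stepf a1 (C1 i) u - AEProof.stepf a2 (C2 j) u| ^ p :=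
    Finset.sum_congr rfl fun i _ => Finset.sum_congr rfl fun j _ => by rw [hcost12 i j]
  have hW11le : ∑ i, ∑ j, a1 i * a1 j * W11 i j
      ≤ ∑ i, ∑ j, a1 i * a1 j *
        ∫ u, |AEProof.stepf a1 (C1 i) u - AEProof.stepf a1 (C1 j) u| ^ p :=
    Finset.sum_le_sum fun i _ => Finset.sum_le_sum fun j _ =>
      mul_le_mul_of_nonneg_left (hub11 i j) (mul_nonneg (ha1.1 i) (ha1.1 j))
  have hW22le : ∑ i, ∑ j, a2 i * a2 j * W22 i j
      ≤ ∑ i, ∑ j, a2 i * a2 j *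
        ∫ u, |AEProof.stepf a2 (C2 i) u - AEProof.stepf a2 (C2 j) u| ^ p :=
    Finset.sum_le_sum fun i _ => Finset.sum_le_sum fun j _ =>
      mul_le_mul_of_nonneg_left (hub22 i j) (mul_nonneg (ha2.1 i) (ha2.1 j))
  linarith [key, hW12eq, hW11le, hW22le]
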